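/- For every real x with 0 < x ≤ 1, the function t ↦ ln_t(x) = (x^t − 1)/t is concave on (0, ∞). -/

import Mathlib

open Real

private lemma aux_hasDerivAt1 (L : ℝ) {t : ℝ} (ht : t ≠ 0) :
    HasDerivAt (fun t : ℝ => (Real.exp (L * t) - 1) / t)
      ((L * Real.exp (L * t) * t - (Real.exp (L * t) - 1) * 1) / t ^ 2) t := by
  have he : HasDerivAt (fun t : ℝ => Real.exp (L * t)) (L * Real.exp (L * t)) t := by
    have := (Real.hasDerivAt_exp (L * t)).comp t ((hasDerivAt_id t).const_mul L)
    simpa [mul_comm, Function.comp_def] using this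
  exact (he.sub_const 1).div (hasDerivAt_id t) ht

private lemma aux_hasDerivAt2 (L : ℝ) {t : ℝ} (ht : t ≠ 0) :
    HasDerivAt (fun t : ℝ => (L * Real.exp (L * t) * t - (Real.exp (L * t) - 1) * 1) / t ^ 2)
      (((L * (L * Real.exp (L * t)) * t + L * Real.exp (L * t) * 1 - L * Real.exp (L * t)) * t ^ 2
        - (L * Real.exp (L * t) * t - (Real.exp (L * t) - 1) * 1) * (↑2 * t ^ 1)) / (t ^ 2) ^ 2)
      t := by
  have he : HasDerivAt (fun t : ℝ => Real.exp (L * t)) (L * Real.exp (L * t)) t := by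
    have := (Real.hasDerivAt_exp (L * t)).comp t ((hasDerivAt_id t).const_mul L)
    simpa [mul_comm, Function.comp_def] using this
  have hn : HasDerivAt
      (fun t : ℝ => L * Real.exp (L * t) * t - (Real.exp (L * t) - 1) * 1)
      (L * (L * Real.exp (L * t)) * t + L * Real.exp (L * t) * 1 - L * Real.exp (L * t)) t := by
    have h1 : HasDerivAt (fun t : ℝ => L * Real.exp (L * t) * t)
        (L * (L * Real.exp (L * t)) * t + L * Real.exp (L * t) * 1) t :=
      (he.const_mul L).mul (hasDerivAt_id t)
    have h2 : HasDerivAt (fun t : ℝ => (Real.exp (L * t) - 1) * 1)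
        (L * Real.exp (L * t)) t := by
      simpa using (he.sub_const 1)
    exact h1.sub h2
  exact hn.div (hasDerivAt_pow 2 t) (pow_ne_zero 2 ht)

/-- For every real `x` with `0 < x ≤ 1`, the function
`t ↦ ln_t(x) = (xᵗ - 1)/t` is concave on `(0, ∞)`. -/
theorem stmt14 (x : ℝ) (hx0 : 0 < x) (hx1 : x ≤ 1) :
    ConcaveOn ℝ (Set.Ioi (0 : ℝ)) (fun t : ℝ => (x ^ t - 1) / t) := by
  have hrw : (fun t : ℝ => (x ^ t - 1) / t)
      = fun t : ℝ => (Real.exp (Real.log x * t) - 1) / t := by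
    funext t
    rw [Real.rpow_def_of_pos hx0]
  rw [hrw]
  set L := Real.log x with hL
  have hL0 : L ≤ 0 := Real.log_nonpos hx0.le hx1
  set f : ℝ → ℝ := fun t => (Real.exp (L * t) - 1) / t with hf
  set g : ℝ → ℝ := fun t =>
    (L * Real.exp (L * t) * t - (Real.exp (L * t) - 1) * 1) / t ^ 2 with hg
  have hderiv : ∀ t ∈ Set.Ioi (0 : ℝ), deriv f t = g t := by
    intro t ht
    exact (aux_hasDerivAt1 L (ne_of_gt ht)).deriv
  have hEq : ∀ t ∈ Set.Ioi (0 : ℝ), deriv f =ᶠ[nhds t] g :=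
    fun t ht => Filter.eventuallyEq_of_mem (isOpen_Ioi.mem_nhds ht) hderiv
  apply concaveOn_of_deriv2_nonpos' (convex_Ioi 0)
  · intro t ht
    exact (aux_hasDerivAt1 L (ne_of_gt ht)).differentiableAt.differentiableWithinAt
  · intro t ht
    have : DifferentiableAt ℝ g t := (aux_hasDerivAt2 L (ne_of_gt ht)).differentiableAt
    exact ((hEq t ht).differentiableAt_iff.mpr this).differentiableWithinAt
  · intro t ht
    have ht0 : (0 : ℝ) < t := ht
    have h2 : deriv^[2] f t = deriv g t := by
      simp only [Function.iterate_succ, Function.iterate_zero, Function.comp_apply, id]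
      exact (hEq t ht).deriv_eq
    rw [h2, (aux_hasDerivAt2 L ht0.ne').deriv]
    -- show the second derivative is nonpositive
    set u : ℝ := -(L * t) with hu
    have hu0 : 0 ≤ u := by
      have : L * t ≤ 0 := mul_nonpos_of_nonpos_of_nonneg hL0 ht0.le
      simpa [hu] using neg_nonneg.mpr this
    have hkey : u ^ 2 + 2 * u + 2 ≤ 2 * Real.exp u := by
      nlinarith [Real.quadratic_le_exp_of_nonneg hu0]
    have hE : Real.exp (L * t) * Real.exp u = 1 := by
      rw [← Real.exp_add]; simp [hu]
    have hEpos : 0 < Real.exp (L * t) := Real.exp_pos _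
    have hEupos : 0 < Real.exp u := Real.exp_pos _
    have hnum : Real.exp (L * t) * (u ^ 2 + 2 * u + 2) - 2 ≤ 0 := by
      nlinarith [mul_le_mul_of_nonneg_left hkey hEpos.le]
    have hLt : L * t = -u := by simp [hu]
    apply div_nonpos_of_nonpos_of_nonneg
    · have : (L * (L * Real.exp (L * t)) * t + L * Real.exp (L * t) * 1 - L * Real.exp (L * t)) * t ^ 2
          - (L * Real.exp (L * t) * t - (Real.exp (L * t) - 1) * 1) * (↑2 * t ^ 1)
          = t * (Real.exp (L * t) * (u ^ 2 + 2 * u + 2) - 2) := by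
        rw [hu]; ring_nf
      rw [this]
      exact mul_nonpos_of_nonneg_of_nonpos ht0.le hnum
    · positivity
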